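/- For every n ≥ 1, all roots of the n-th Eulerian polynomial A_n(t) are real, distinct, and nonpositive; in particular A_n(t) factors completely over the reals with distinct nonpositive roots. -/

import Mathlib

/-- The descent number of a permutation of `Fin n`. -/
def des {n : ℕ} (w : Equiv.Perm (Fin n)) : ℕ :=
  (Finset.univ.filter fun r : Fin n =>
    ∃ s : Fin n, (s : ℕ) = (r : ℕ) + 1 ∧ w s < w r).card

/-- The `n`-th Eulerian polynomial `A_n(t) = ∑_{w ∈ S_n} t^{des(w)+1}`,
as a real polynomial. -/
noncomputable def eulerianPoly (n : ℕ) : Polynomial ℝ :=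
  ∑ w : Equiv.Perm (Fin n), (Polynomial.X : Polynomial ℝ) ^ (des w + 1)

open Polynomial Finset

namespace EulerAux


/-- The cycle moving position `i` to the end. -/
def rho (n : ℕ) (i : Fin (n + 1)) : Equiv.Perm (Fin (n + 1)) where
  toFun j := if (j : ℕ) < (i : ℕ) then j else if (j : ℕ) = (i : ℕ) then Fin.last n
    else ⟨(j : ℕ) - 1, by omega⟩
  invFun k := if (k : ℕ) < (i : ℕ) then k else if h : (k : ℕ) = n then i
    else ⟨(k : ℕ) + 1, by have := k.isLt; omega⟩
  left_inv j := by
    have hi := i.isLt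
    have hj := j.isLt
    dsimp only
    split_ifs <;> (try rfl) <;> (apply Fin.ext) <;>
      simp only [Fin.last, Fin.val_last, Fin.val_mk] at * <;> (first | omega | simp_all)
  right_inv k := by
    have hi := i.isLt
    have hk := k.isLt
    dsimp only
    split_ifs <;> (try rfl) <;> (apply Fin.ext) <;>
      (try simp only [Fin.last, Fin.val_last, Fin.val_mk] at *) <;> (first | omega | simp_all)

@[simp] lemma rho_apply_lt {n : ℕ} (i : Fin (n+1)) (j : Fin (n+1)) (h : (j:ℕ) < (i:ℕ)) :
    rho n i j = j := by
  simp only [rho, Equiv.coe_fn_mk]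
  rw [if_pos h]

@[simp] lemma rho_apply_self {n : ℕ} (i : Fin (n+1)) : rho n i i = Fin.last n := by
  rw [rho, Equiv.coe_fn_mk]
  rw [if_neg (lt_irrefl _), if_pos rfl]

lemma rho_apply_gt {n : ℕ} (i : Fin (n+1)) (j : Fin (n+1)) (h : (i:ℕ) < (j:ℕ)) :
    rho n i j = ⟨(j:ℕ) - 1, by have := j.isLt; omega⟩ := by
  simp only [rho, Equiv.coe_fn_mk]
  rw [if_neg (by omega), if_neg (by omega)]

/-- Extend a permutation of `Fin n` to `Fin (n+1)` fixing the last element. -/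
def extPerm {n : ℕ} (v : Equiv.Perm (Fin n)) : Equiv.Perm (Fin (n + 1)) where
  toFun j := if h : (j : ℕ) < n then (v ⟨j, h⟩).castSucc else j
  invFun j := if h : (j : ℕ) < n then (v.symm ⟨j, h⟩).castSucc else j
  left_inv j := by
    by_cases h : (j : ℕ) < n
    · simp only [dif_pos h]
      rw [dif_pos (by simp)]
      simp [Fin.ext_iff]
    · simp [h]
  right_inv j := by
    by_cases h : (j : ℕ) < n
    · simp only [dif_pos h]
      rw [dif_pos (by simp)]
      simp [Fin.ext_iff]
    · simp [h]

lemma extPerm_apply_lt {n : ℕ} (v : Equiv.Perm (Fin n)) (j : Fin (n+1)) (h : (j:ℕ) < n) :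
    extPerm v j = (v ⟨j, h⟩).castSucc := by simp [extPerm, h]

@[simp] lemma extPerm_apply_last {n : ℕ} (v : Equiv.Perm (Fin n)) :
    extPerm v (Fin.last n) = Fin.last n := by simp [extPerm]

/-- Insert the maximum value at position `i` into `v`. -/
def ins {n : ℕ} (v : Equiv.Perm (Fin n)) (i : Fin (n + 1)) : Equiv.Perm (Fin (n + 1)) :=
  (rho n i).trans (extPerm v)

lemma ins_apply_lt {n : ℕ} (v : Equiv.Perm (Fin n)) (i : Fin (n+1)) (j : Fin (n+1))
    (h : (j:ℕ) < (i:ℕ)) (h2 : (j:ℕ) < n) :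
    ins v i j = (v ⟨j, h2⟩).castSucc := by
  simp only [ins, Equiv.trans_apply, rho_apply_lt i j h]
  exact extPerm_apply_lt v j h2

lemma ins_apply_self {n : ℕ} (v : Equiv.Perm (Fin n)) (i : Fin (n+1)) :
    ins v i i = Fin.last n := by
  simp [ins]

lemma ins_apply_gt {n : ℕ} (v : Equiv.Perm (Fin n)) (i : Fin (n+1)) (j : Fin (n+1))
    (h : (i:ℕ) < (j:ℕ)) (h2 : (j:ℕ) - 1 < n) :
    ins v i j = (v ⟨(j:ℕ) - 1, h2⟩).castSucc := by
  simp only [ins, Equiv.trans_apply, rho_apply_gt i j h]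
  exact extPerm_apply_lt v _ h2

/-- descent indicator at position `r`. -/
def dd {k : ℕ} (v : Equiv.Perm (Fin k)) (r : ℕ) : ℕ :=
  if h : r + 1 < k then (if v ⟨r+1, h⟩ < v ⟨r, by omega⟩ then 1 else 0) else 0

lemma dd_le_one {k : ℕ} (v : Equiv.Perm (Fin k)) (r : ℕ) : dd v r ≤ 1 := by
  unfold dd; split_ifs <;> omega

lemma dd_eq_zero_of_ge {k : ℕ} (v : Equiv.Perm (Fin k)) {r : ℕ} (h : k ≤ r + 1) :
    dd v r = 0 := by
  unfold dd; rw [dif_neg (by omega)]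

lemma des_eq_sum {k : ℕ} (v : Equiv.Perm (Fin k)) : des v = ∑ r ∈ Finset.range k, dd v r := by
  rw [des, Finset.card_filter, ← Fin.sum_univ_eq_sum_range (fun r => dd v r) k]
  refine Finset.sum_congr rfl fun r _ => ?_
  by_cases h : (r : ℕ) + 1 < k
  · rw [dd, dif_pos h]
    by_cases h2 : v ⟨(r:ℕ)+1, h⟩ < v ⟨(r:ℕ), by omega⟩
    · rw [if_pos h2, if_pos ⟨⟨(r:ℕ)+1, h⟩, rfl, by simpa using h2⟩]
    · rw [if_neg h2, if_neg]
      rintro ⟨s, hs1, hs2⟩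
      have hs : s = ⟨(r:ℕ)+1, h⟩ := Fin.ext hs1
      subst hs
      exact h2 (by simpa using hs2)
  · rw [dd, dif_neg h, if_neg]
    rintro ⟨s, hs1, _⟩
    exact h (hs1 ▸ s.isLt)

lemma des_le {k : ℕ} (v : Equiv.Perm (Fin k)) : des v ≤ k := by
  calc des v ≤ Finset.univ.card := Finset.card_filter_le _ _
  _ = k := by simp



lemma dd_ins {n : ℕ} (v : Equiv.Perm (Fin n)) (i : Fin (n+1)) (r : ℕ) :
    dd (ins v i) r =
      if r + 1 < (i:ℕ) then dd v r
      else if r + 1 = (i:ℕ) then 0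
      else if r = (i:ℕ) then (if r < n then 1 else 0)
      else dd v (r - 1) := by
  have hi : (i:ℕ) ≤ n := Nat.lt_succ_iff.mp i.isLt
  by_cases h1 : r + 1 < (i:ℕ)
  · rw [if_pos h1]
    have hrn : r + 1 < n := by omega
    rw [dd, dif_pos (show r + 1 < n + 1 by omega), dd, dif_pos hrn]
    rw [ins_apply_lt v i ⟨r+1, by omega⟩ (by simpa using h1) (by simpa using hrn)]
    rw [ins_apply_lt v i ⟨r, by omega⟩ (by simp; omega) (by simp; omega)]
    simp only [Fin.castSucc_lt_castSucc_iff]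
  · rw [if_neg h1]
    by_cases h2 : r + 1 = (i:ℕ)
    · rw [if_pos h2]
      have hrn : r < n := by omega
      rw [dd, dif_pos (show r + 1 < n + 1 by omega)]
      have e1 : ins v i ⟨r+1, by omega⟩ = Fin.last n := by
        have : (⟨r+1, by omega⟩ : Fin (n+1)) = i := Fin.ext (by simpa using h2)
        rw [this]; exact ins_apply_self v i
      rw [e1, ins_apply_lt v i ⟨r, by omega⟩ (by simp; omega) (by simpa using hrn)]
      rw [if_neg (by exact (Fin.castSucc_lt_last _).not_gt)]
    · rw [if_neg h2]
      by_cases h3 : r = (i:ℕ)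
      · rw [if_pos h3]
        by_cases h4 : r < n
        · rw [if_pos h4, dd, dif_pos (show r + 1 < n + 1 by omega)]
          have e1 : ins v i ⟨r, by omega⟩ = Fin.last n := by
            have : (⟨r, by omega⟩ : Fin (n+1)) = i := Fin.ext (by simpa using h3)
            rw [this]; exact ins_apply_self v i
          rw [e1, ins_apply_gt v i ⟨r+1, by omega⟩ (by simp; omega) (by simp; omega)]
          rw [if_pos (Fin.castSucc_lt_last _)]
        · rw [if_neg h4, dd, dif_neg (by omega)]
      · rw [if_neg h3]
        have hgt : (i:ℕ) < r := by omega
        by_cases h4 : r < n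
        · rw [dd, dif_pos (show r + 1 < n + 1 by omega), dd, dif_pos (show (r-1) + 1 < n by omega)]
          rw [ins_apply_gt v i ⟨r+1, by omega⟩ (by simp; omega) (by simp; omega)]
          rw [ins_apply_gt v i ⟨r, by omega⟩ (by simp; omega) (by simp; omega)]
          simp only [Fin.castSucc_lt_castSucc_iff]
          have e2 : (⟨r + 1 - 1, by omega⟩ : Fin n) = ⟨(r-1)+1, by omega⟩ := Fin.ext (by simp; omega)
          have e3 : (⟨r - 1, by omega⟩ : Fin n) = ⟨r-1, by omega⟩ := rfl
          rw [e2]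
        · rw [dd, dif_neg (by omega), dd, dif_neg (by omega)]

/-- Indicator: inserting at `i` does NOT create a new descent. -/
def cc {n : ℕ} (v : Equiv.Perm (Fin n)) (k : ℕ) : ℕ :=
  if k = n then 1 else (if 1 ≤ k then dd v (k-1) else 0)

lemma cc_le_one {n : ℕ} (v : Equiv.Perm (Fin n)) (k : ℕ) : cc v k ≤ 1 := by
  unfold cc; split_ifs <;> first | omega | exact dd_le_one v _

lemma des_ins {n : ℕ} (v : Equiv.Perm (Fin n)) (i : Fin (n+1)) :
    des (ins v i) + cc v (i:ℕ) = des v + 1 := by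
  have hi : (i:ℕ) ≤ n := Nat.lt_succ_iff.mp i.isLt
  -- split both des-sums at position i
  have hsplitw : des (ins v i)
      = (∑ r ∈ Finset.range (i:ℕ), dd (ins v i) r)
        + ∑ r ∈ Finset.Ico (i:ℕ) (n+1), dd (ins v i) r := by
    rw [des_eq_sum, Finset.range_eq_Ico,
      ← Finset.sum_Ico_consecutive _ (Nat.zero_le (i:ℕ)) (by omega), ← Finset.range_eq_Ico]
  have hsplitv : des v
      = (∑ r ∈ Finset.range (i:ℕ), dd v r) + ∑ r ∈ Finset.Ico (i:ℕ) n, dd v r := by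
    rw [des_eq_sum, Finset.range_eq_Ico,
      ← Finset.sum_Ico_consecutive _ (Nat.zero_le (i:ℕ)) (by omega), ← Finset.range_eq_Ico]
  -- piece A
  have hA : (∑ r ∈ Finset.range (i:ℕ), dd (ins v i) r) + (if 1 ≤ (i:ℕ) then dd v ((i:ℕ)-1) else 0)
      = ∑ r ∈ Finset.range (i:ℕ), dd v r := by
    rcases Nat.eq_zero_or_pos (i:ℕ) with h0 | h0
    · simp [h0]
    · obtain ⟨j, hj⟩ : ∃ j, (i:ℕ) = j + 1 := ⟨(i:ℕ) - 1, by omega⟩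
      rw [hj, Finset.sum_range_succ, Finset.sum_range_succ, if_pos (by omega)]
      have e1 : dd (ins v i) j = 0 := by
        rw [dd_ins, if_neg (by omega), if_pos (by omega)]
      have e2 : ∀ r ∈ Finset.range j, dd (ins v i) r = dd v r := by
        intro r hr
        rw [Finset.mem_range] at hr
        rw [dd_ins, if_pos (by omega)]
      rw [Finset.sum_congr rfl e2, e1]
      have e4 : j + 1 - 1 = j := by omega
      rw [e4]
      simp
  -- piece B
  have hB : (∑ r ∈ Finset.Ico (i:ℕ) (n+1), dd (ins v i) r)
      = (if (i:ℕ) = n then 0 else 1) + ∑ r ∈ Finset.Ico (i:ℕ) n, dd v r := by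
    rw [Finset.sum_Ico_eq_sum_range, Finset.sum_Ico_eq_sum_range]
    have hn : n + 1 - (i:ℕ) = (n - (i:ℕ)) + 1 := by omega
    rw [hn, Finset.sum_range_succ']
    have e0 : dd (ins v i) ((i:ℕ) + 0) = (if (i:ℕ) = n then 0 else 1) := by
      rw [dd_ins]
      split_ifs <;> omega
    have e1 : ∀ r ∈ Finset.range (n - (i:ℕ)), dd (ins v i) ((i:ℕ) + (r + 1)) = dd v ((i:ℕ) + r) := by
      intro r hr
      rw [dd_ins, if_neg (by omega), if_neg (by omega), if_neg (by omega)]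
      have e : (i:ℕ) + (r + 1) - 1 = (i:ℕ) + r := by omega
      rw [e]
    rw [Finset.sum_congr rfl e1, e0]
    omega
  -- combine
  have hcc : cc v (i:ℕ) = if (i:ℕ) = n then 1 else (if 1 ≤ (i:ℕ) then dd v ((i:ℕ)-1) else 0) := rfl
  by_cases hn : (i:ℕ) = n
  · have hz : (if 1 ≤ (i:ℕ) then dd v ((i:ℕ)-1) else 0) = 0 := by
      split_ifs with h
      · exact dd_eq_zero_of_ge v (by omega)
      · rfl
    rw [hcc, if_pos hn]
    rw [if_pos hn] at hB
    rw [hz] at hA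
    omega
  · rw [hcc, if_neg hn]
    rw [if_neg hn] at hB
    omega

lemma sum_cc {n : ℕ} (v : Equiv.Perm (Fin n)) :
    ∑ k ∈ Finset.range (n+1), cc v k = des v + 1 := by
  rw [Finset.sum_range_succ]
  have e0 : cc v n = 1 := by rw [cc, if_pos rfl]
  have e1 : ∀ k ∈ Finset.range n, cc v k = (if 1 ≤ k then dd v (k-1) else 0) := by
    intro k hk
    rw [Finset.mem_range] at hk
    rw [cc, if_neg (by omega)]
  rw [Finset.sum_congr rfl e1, e0]
  rcases Nat.eq_zero_or_pos n with h0 | h0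
  · subst h0; simp [des_eq_sum]
  · obtain ⟨m, hm⟩ : ∃ m, n = m + 1 := ⟨n - 1, by omega⟩
    subst hm
    rw [Finset.sum_range_succ']
    have e2 : ∀ r ∈ Finset.range m, (if 1 ≤ r + 1 then dd v (r + 1 - 1) else 0) = dd v r := by
      intro r _
      rw [if_pos (by omega)]
      congr 1
    have e3 : (if 1 ≤ 0 then dd v (0-1) else 0) = 0 := by rw [if_neg (by omega)]
    rw [Finset.sum_congr rfl e2, e3, des_eq_sum, Finset.sum_range_succ,
      dd_eq_zero_of_ge v (by omega)]


lemma sum_ins {n : ℕ} (v : Equiv.Perm (Fin n)) :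
    ∑ i : Fin (n+1), (X : ℝ[X]) ^ (des (ins v i) + 1)
      = (des v + 1) • (X:ℝ[X]) ^ (des v + 1) + (n - des v) • (X:ℝ[X]) ^ (des v + 2) := by
  have h1 : ∀ i : Fin (n+1), (X : ℝ[X]) ^ (des (ins v i) + 1)
      = if cc v (i:ℕ) = 1 then (X:ℝ[X])^(des v + 1) else (X:ℝ[X])^(des v + 2) := by
    intro i
    have h := des_ins v i
    have hle := cc_le_one v (i:ℕ)
    by_cases hc : cc v (i:ℕ) = 1
    · rw [if_pos hc]; congr 1; omega
    · rw [if_neg hc]; congr 1; omega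
  rw [Finset.sum_congr rfl (fun i _ => h1 i)]
  rw [Fin.sum_univ_eq_sum_range
    (fun k => if cc v k = 1 then (X:ℝ[X])^(des v+1) else (X:ℝ[X])^(des v+2)) (n+1)]
  rw [Finset.sum_ite, Finset.sum_const, Finset.sum_const]
  have hc1 : (Finset.filter (fun k => cc v k = 1) (Finset.range (n+1))).card = des v + 1 := by
    rw [Finset.card_filter, ← sum_cc v]
    refine Finset.sum_congr rfl fun k _ => ?_
    have := cc_le_one v k
    split_ifs with h <;> omega
  have hc2 : (Finset.filter (fun k => ¬ cc v k = 1) (Finset.range (n+1))).card = n - des v := by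
    have h := Finset.card_filter_add_card_filter_not
      (s := Finset.range (n+1)) (p := fun k => cc v k = 1)
    rw [Finset.card_range, hc1] at h
    have := des_le v
    omega
  rw [hc1, hc2]

lemma ins_bijective (n : ℕ) :
    Function.Bijective (fun p : Equiv.Perm (Fin n) × Fin (n+1) => ins p.1 p.2) := by
  rw [Fintype.bijective_iff_injective_and_card]
  constructor
  · rintro ⟨v, i⟩ ⟨v', i'⟩ h
    simp only at h
    have hii : i = i' := by
      have h2 := ins_apply_self v' i'
      have h1 : ins v' i' i = Fin.last n := by rw [← h]; exact ins_apply_self v i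
      exact (ins v' i').injective (h1.trans h2.symm)
    subst hii
    have hvv : v = v' := by
      apply Equiv.ext
      intro j
      by_cases hj : (j:ℕ) < (i:ℕ)
      · have e1 : ins v i j.castSucc = (v j).castSucc :=
          ins_apply_lt v i j.castSucc (by simpa using hj) j.isLt
        have e2 : ins v' i j.castSucc = (v' j).castSucc :=
          ins_apply_lt v' i j.castSucc (by simpa using hj) j.isLt
        rw [h] at e1
        exact Fin.castSucc_inj.mp (e1.symm.trans e2)
      · have e1 : ins v i j.succ = (v j).castSucc :=
          ins_apply_gt v i j.succ (by simp; omega) (by simpa using j.isLt)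
        have e2 : ins v' i j.succ = (v' j).castSucc :=
          ins_apply_gt v' i j.succ (by simp; omega) (by simpa using j.isLt)
        rw [h] at e1
        exact Fin.castSucc_inj.mp (e1.symm.trans e2)
    rw [hvv]
  · rw [Fintype.card_prod, Fintype.card_perm, Fintype.card_perm, Fintype.card_fin,
      Fintype.card_fin, Nat.factorial_succ, mul_comm]

lemma euler_rec (n : ℕ) :
    eulerianPoly (n+1)
      = X * ((1 - X) * derivative (eulerianPoly n) + C ((n:ℝ)+1) * eulerianPoly n) := by
  have hsum : eulerianPoly (n+1)
      = ∑ p : Equiv.Perm (Fin n) × Fin (n+1), (X:ℝ[X])^(des (ins p.1 p.2) + 1) :=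
    (Fintype.sum_bijective _ (ins_bijective n) _ _ (fun p => rfl)).symm
  rw [hsum, Fintype.sum_prod_type]
  rw [Finset.sum_congr rfl (fun v _ => sum_ins v)]
  rw [eulerianPoly, derivative_sum, Finset.mul_sum, Finset.mul_sum,
    ← Finset.sum_add_distrib, Finset.mul_sum]
  refine Finset.sum_congr rfl fun v _ => ?_
  have hd : des v ≤ n := des_le v
  rw [derivative_X_pow, nsmul_eq_mul, nsmul_eq_mul]
  push_cast [Nat.cast_sub hd]
  simp only [map_add, map_one, Polynomial.C_eq_natCast]
  ring


lemma poly_root_between (p : ℝ[X]) {a b : ℝ} (hab : a < b)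
    (hsign : p.eval a * p.eval b < 0) :
    ∃ x, a < x ∧ x < b ∧ p.eval x = 0 := by
  have hcont : ContinuousOn (fun x => p.eval x) (Set.Icc a b) := p.continuous.continuousOn
  rcases mul_neg_iff.mp hsign with ⟨ha, hb⟩ | ⟨ha, hb⟩
  · obtain ⟨x, hx, hx0⟩ := intermediate_value_Ioo' hab.le hcont (Set.mem_Ioo.mpr ⟨hb, ha⟩)
    exact ⟨x, hx.1, hx.2, hx0⟩
  · obtain ⟨x, hx, hx0⟩ := intermediate_value_Ioo hab.le hcont (Set.mem_Ioo.mpr ⟨ha, hb⟩)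
    exact ⟨x, hx.1, hx.2, hx0⟩

lemma sign_mul_neg {x y : ℝ} {k : ℕ} (hx : 0 < (-1:ℝ)^k * x) (hy : 0 < (-1:ℝ)^(k+1) * y) :
    x * y < 0 := by
  rcases Nat.even_or_odd k with h | h
  · rw [h.neg_one_pow, one_mul] at hx
    rw [pow_succ, h.neg_one_pow, one_mul, neg_one_mul] at hy
    nlinarith
  · rw [h.neg_one_pow, neg_one_mul] at hx
    have h2 : Even (k+1) := Odd.add_one h
    rw [h2.neg_one_pow, one_mul] at hy
    nlinarith

lemma neg_prod_sign {n : ℕ} {s : Finset (Fin n)} {g : Fin n → ℝ} (hg : ∀ j ∈ s, g j < 0) :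
    0 < (-1:ℝ)^s.card * ∏ j ∈ s, g j := by
  have h : ∏ j ∈ s, g j = (-1:ℝ)^s.card * ∏ j ∈ s, (-(g j)) := by
    rw [← Finset.prod_const, ← Finset.prod_mul_distrib]
    exact Finset.prod_congr rfl fun j _ => by ring
  rw [h, ← mul_assoc, ← pow_add, Even.neg_one_pow ⟨s.card, rfl⟩, one_mul]
  exact Finset.prod_pos fun j hj => neg_pos.mpr (hg j hj)

lemma step_factor (m : ℕ) (A : ℝ[X]) (f : Fin (m+1) → ℝ)
    (hanti : StrictAnti f) (hf0 : f 0 = 0) (hA : A = ∏ k, (X - C (f k))) :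
    ∃ g : Fin (m+2) → ℝ, StrictAnti g ∧ g 0 = 0 ∧
      X * ((1 - X) * derivative A + C ((m:ℝ)+2) * A) = ∏ k : Fin (m+2), (X - C (g k)) := by
  set N : ℝ[X] := (1 - X) * derivative A + C ((m:ℝ)+2) * A with hN
  have hfle : ∀ k, f k ≤ 0 := fun k => by
    rw [← hf0]; exact hanti.antitone (Fin.zero_le k)
  have hAmonic : A.Monic := by
    rw [hA]; exact monic_prod_of_monic _ _ fun k _ => monic_X_sub_C _
  have hAdeg : A.natDegree = m + 1 := by
    rw [hA, natDegree_prod _ _ fun k _ => X_sub_C_ne_zero _]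
    simp [natDegree_X_sub_C]
  have hAcoeff : A.coeff (m+1) = 1 := by
    have := hAmonic.coeff_natDegree
    rwa [hAdeg] at this
  have hone : (1 - X : ℝ[X]).natDegree = 1 := by
    have e : (1 - X : ℝ[X]) = -(X - C 1) := by rw [C_1]; ring
    rw [e, natDegree_neg, natDegree_X_sub_C]
  have hdA : (derivative A).natDegree ≤ m := by
    have h := natDegree_derivative_le A
    rw [hAdeg] at h
    simpa using h
  have hNdegle : N.natDegree ≤ m + 1 := by
    rw [hN]
    refine le_trans (natDegree_add_le _ _) (max_le ?_ ?_)
    · exact le_trans (natDegree_mul_le) (by rw [hone]; omega)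
    · exact le_trans (natDegree_C_mul_le _ _) (by rw [hAdeg])
  have hcoeffdA : (derivative A).coeff m = (m+1 : ℝ) := by
    rw [coeff_derivative, hAcoeff]
    push_cast; ring
  have hcoeffdA1 : (derivative A).coeff (m+1) = 0 :=
    coeff_eq_zero_of_natDegree_lt (by omega)
  have hNcoeff : N.coeff (m+1) = 1 := by
    rw [hN, coeff_add, coeff_C_mul, sub_mul, one_mul, coeff_sub, coeff_X_mul,
      hcoeffdA1, hcoeffdA, hAcoeff]
    push_cast; ring
  have hNne : N ≠ 0 := fun h => by simp [h] at hNcoeff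
  have hNdeg : N.natDegree = m + 1 :=
    natDegree_eq_of_le_of_coeff_ne_zero hNdegle (by rw [hNcoeff]; norm_num)
  have hNmonic : N.Monic := by
    rw [Monic, leadingCoeff, hNdeg, hNcoeff]
  -- evaluations
  have hAroot : ∀ k, A.eval (f k) = 0 := fun k => by
    rw [hA, eval_prod]
    exact Finset.prod_eq_zero (Finset.mem_univ k) (by simp)
  have hdAeval : ∀ k, (derivative A).eval (f k) = ∏ j ∈ Finset.univ.erase k, (f k - f j) := by
    intro k
    rw [hA, ← Finset.mul_prod_erase _ _ (Finset.mem_univ k), derivative_mul, derivative_X_sub_C]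
    rw [eval_add, eval_mul, eval_mul, eval_sub, eval_X, eval_C, sub_self, zero_mul, add_zero,
      eval_one, one_mul, eval_prod]
    exact Finset.prod_congr rfl fun j _ => by simp
  have hNeval : ∀ k, N.eval (f k) = (1 - f k) * ∏ j ∈ Finset.univ.erase k, (f k - f j) := by
    intro k
    simp only [hN, eval_add, eval_mul, eval_C, eval_sub, eval_one, eval_X, hAroot k,
      mul_zero, add_zero, hdAeval k]
  have hNsign : ∀ k : Fin (m+1), 0 < (-1:ℝ)^(k:ℕ) * N.eval (f k) := by
    intro k
    rw [hNeval]
    have hsplit : Finset.univ.erase k = Finset.Iio k ∪ Finset.Ioi k := by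
      ext j
      simp only [Finset.mem_erase, Finset.mem_univ, and_true, Finset.mem_union,
        Finset.mem_Iio, Finset.mem_Ioi]
      exact ne_iff_lt_or_gt
    have hdisj : Disjoint (Finset.Iio k) (Finset.Ioi k) := by
      rw [Finset.disjoint_left]
      intro j hj1 hj2
      exact absurd (Finset.mem_Iio.mp hj1) (not_lt.mpr (Finset.mem_Ioi.mp hj2).le)
    rw [hsplit, Finset.prod_union hdisj]
    have h1 : 0 < (-1:ℝ)^(k:ℕ) * ∏ j ∈ Finset.Iio k, (f k - f j) := by
      have h := neg_prod_sign (s := Finset.Iio k) (g := fun j => f k - f j)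
        (fun j hj => by have := hanti (Finset.mem_Iio.mp hj); show f k - f j < 0; linarith)
      rwa [Fin.card_Iio] at h
    have h2 : 0 < ∏ j ∈ Finset.Ioi k, (f k - f j) :=
      Finset.prod_pos fun j hj => by have := hanti (Finset.mem_Ioi.mp hj); linarith
    have h3 : 0 < 1 - f k := by have := hfle k; linarith
    nlinarith [mul_pos (mul_pos h1 h2) h3]
  -- far left point
  obtain ⟨t, ht1, ht2⟩ : ∃ t, t < f (Fin.last m) ∧ 0 < (-1:ℝ)^(m+1) * N.eval t := by
    set M := C ((-1:ℝ)^(m+1)) * N.comp (-X) with hM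
    have hXne : (natDegree (-X : ℝ[X]) ≠ 0) := by
      rw [natDegree_neg, natDegree_X]; omega
    have hMlead : M.leadingCoeff = 1 := by
      rw [hM, leadingCoeff_mul, leadingCoeff_C, leadingCoeff_comp hXne, hNmonic.leadingCoeff,
        leadingCoeff_neg, leadingCoeff_X, hNdeg]
      rw [one_mul, ← pow_add, Even.neg_one_pow ⟨m+1, rfl⟩]
    have hMne : M ≠ 0 := fun h => by simp [h] at hMlead
    have hMnatdeg : M.natDegree = m + 1 := by
      rw [hM, natDegree_C_mul (by positivity), natDegree_comp, hNdeg, natDegree_neg,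
        natDegree_X, mul_one]
    have hMdeg : 0 < M.degree := by
      rw [← natDegree_pos_iff_degree_pos, hMnatdeg]; omega
    have htend := tendsto_atTop_of_leadingCoeff_nonneg M hMdeg (by rw [hMlead]; norm_num)
    obtain ⟨s, hs1, hs2⟩ :=
      ((htend.eventually_gt_atTop 0).and (Filter.eventually_gt_atTop (-(f (Fin.last m))))).exists
    refine ⟨-s, by linarith, ?_⟩
    have he : M.eval s = (-1:ℝ)^(m+1) * N.eval (-s) := by
      rw [hM, eval_mul, eval_C, eval_comp, eval_neg, eval_X]
    rw [← he]
    exact hs1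
  -- roots of N between consecutive roots of A
  have hroots : ∀ k : Fin (m+1),
      ∃ x, (if h : (k:ℕ)+1 < m+1 then f ⟨(k:ℕ)+1, h⟩ else t) < x ∧ x < f k ∧ N.eval x = 0 := by
    intro k
    by_cases h : (k:ℕ)+1 < m+1
    · rw [dif_pos h]
      have hab : f ⟨(k:ℕ)+1, h⟩ < f k := hanti (by rw [Fin.lt_def]; simp only [Fin.val_mk]; omega)
      have hprod : N.eval (f k) * N.eval (f ⟨(k:ℕ)+1, h⟩) < 0 :=
        sign_mul_neg (hNsign k) (hNsign ⟨(k:ℕ)+1, h⟩)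
      exact poly_root_between N hab (by rw [mul_comm]; exact hprod)
    · rw [dif_neg h]
      have hklast : k = Fin.last m := Fin.ext (by have := k.isLt; simp only [Fin.val_last]; omega)
      have hab : t < f k := by rw [hklast]; exact ht1
      have hy : 0 < (-1:ℝ)^((k:ℕ)+1) * N.eval t := by
        have hm : (k:ℕ) = m := by have := k.isLt; omega
        rw [hm]; exact ht2
      have hprod : N.eval (f k) * N.eval t < 0 := sign_mul_neg (hNsign k) hy
      exact poly_root_between N hab (by rw [mul_comm]; exact hprod)
  choose x hx1 hx2 hx3 using hroots
  set g : Fin (m+2) → ℝ :=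
    fun k => if h : (k:ℕ) = 0 then 0 else x ⟨(k:ℕ)-1, by have := k.isLt; omega⟩ with hg
  have hg0 : g 0 = 0 := by simp [hg]
  have hgsucc : ∀ k : Fin (m+1), g k.succ = x k := by
    intro k
    simp only [hg, Fin.val_succ]
    rw [dif_neg (by omega)]
    exact congrArg x (Fin.ext (by simp only [Fin.val_mk]; omega))
  have hganti : StrictAnti g := by
    rw [Fin.strictAnti_iff_succ_lt]
    intro i
    rw [hgsucc i]
    by_cases h0 : (i:ℕ) = 0
    · have hc : i.castSucc = 0 := Fin.ext (by simp [h0])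
      rw [hc, hg0]
      have h1 := hx2 i
      have h2 : f i = 0 := by rw [show i = 0 from Fin.ext h0, hf0]
      linarith
    · have hj1 : ((i:ℕ)-1)+1 < m+1 := by have := i.isLt; omega
      have hgc : g i.castSucc = x ⟨(i:ℕ)-1, by have := i.isLt; omega⟩ := by
        simp only [hg, Fin.coe_castSucc]
        rw [dif_neg h0]
      rw [hgc]
      have h1 := hx1 ⟨(i:ℕ)-1, by have := i.isLt; omega⟩
      rw [dif_pos hj1] at h1
      have hfi : f ⟨((i:ℕ)-1)+1, hj1⟩ = f i :=
        congrArg f (Fin.ext (by simp only [Fin.val_mk]; omega))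
      have h2 := hx2 i
      rw [hfi] at h1
      linarith
  have hxanti : StrictAnti x := by
    intro a b hab
    have := hganti (Fin.succ_lt_succ_iff.mpr hab)
    rwa [hgsucc, hgsucc] at this
  have hxinj : Function.Injective x := hxanti.injective
  have hQmonic : (∏ k : Fin (m+1), (X - C (x k))).Monic :=
    monic_prod_of_monic _ _ fun k _ => monic_X_sub_C _
  have hQdeg : (∏ k : Fin (m+1), (X - C (x k))).natDegree = m+1 := by
    rw [natDegree_prod _ _ fun k _ => X_sub_C_ne_zero _]
    simp [natDegree_X_sub_C]
  have hNQ : N = ∏ k : Fin (m+1), (X - C (x k)) := by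
    set Q := ∏ k : Fin (m+1), (X - C (x k)) with hQ
    by_cases hD : N - Q = 0
    · exact sub_eq_zero.mp hD
    · exfalso
      apply hD
      have hQne : Q ≠ 0 := hQmonic.ne_zero
      have hdegNQ : N.degree = Q.degree := by
        rw [degree_eq_natDegree hNne, degree_eq_natDegree hQne, hNdeg, hQdeg]
      have hdeglt : (N - Q).degree < N.degree :=
        degree_sub_lt hdegNQ hNne (by rw [hNmonic.leadingCoeff, hQmonic.leadingCoeff])
      refine Polynomial.eq_zero_of_natDegree_lt_card_of_eval_eq_zero (N - Q) hxinj
        (fun k => ?_) ?_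
      · have hQr : Q.eval (x k) = 0 := by
          rw [hQ, eval_prod]
          exact Finset.prod_eq_zero (Finset.mem_univ k) (by simp)
        rw [eval_sub, hx3 k, hQr, sub_zero]
      · simpa using (natDegree_lt_natDegree hD hdeglt).trans_eq hNdeg
  refine ⟨g, hganti, hg0, ?_⟩
  have hQg : ∏ k : Fin (m+1), (X - C (x k)) = ∏ k : Fin (m+1), (X - C (g k.succ)) :=
    Finset.prod_congr rfl fun k _ => by rw [hgsucc k]
  rw [Fin.prod_univ_succ, hg0, map_zero, sub_zero, hNQ, hQg]


lemma euler_one : eulerianPoly 1 = X := by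
  rw [eulerianPoly, Finset.univ_unique, Finset.sum_singleton]
  have h : des (default : Equiv.Perm (Fin 1)) = 0 := by
    rw [des, Finset.card_eq_zero, Finset.filter_eq_empty_iff]
    rintro r - ⟨s, hs, -⟩
    have := s.isLt
    omega
  rw [h, pow_one]

lemma euler_factor (m : ℕ) :
    ∃ f : Fin (m+1) → ℝ, StrictAnti f ∧ f 0 = 0 ∧
      eulerianPoly (m+1) = ∏ k, (X - C (f k)) := by
  induction m with
  | zero =>
    refine ⟨fun _ => 0, fun a b hab => absurd (Fin.ext (by have := a.isLt; have := b.isLt; omega) : a = b) hab.ne, rfl, ?_⟩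
    rw [euler_one]
    simp
  | succ m ih =>
    obtain ⟨f, hanti, hf0, hA⟩ := ih
    obtain ⟨g, hganti, hg0, hfact⟩ := step_factor m (eulerianPoly (m+1)) f hanti hf0 hA
    refine ⟨g, hganti, hg0, ?_⟩
    rw [euler_rec (m+1), ← hfact]
    have hc : (((m+1:ℕ)):ℝ) + 1 = (m:ℝ) + 2 := by push_cast; ring
    rw [hc]

end EulerAux

/-- The `n`-th Eulerian polynomial factors completely over `ℝ` with `n`
distinct, nonpositive real roots. -/
theorem eulerianPoly_real_rooted (n : ℕ) (hn : 1 ≤ n) :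
    ∃ (c : ℝ) (S : Finset ℝ), c ≠ 0 ∧ S.card = n ∧ (∀ x ∈ S, x ≤ 0) ∧
      eulerianPoly n =
        Polynomial.C c * ∏ x ∈ S, (Polynomial.X - Polynomial.C x) := by
  obtain ⟨m, rfl⟩ : ∃ m, n = m + 1 := ⟨n - 1, by omega⟩
  obtain ⟨f, hanti, hf0, hfact⟩ := EulerAux.euler_factor m
  refine ⟨1, Finset.image f Finset.univ, one_ne_zero, ?_, ?_, ?_⟩
  · rw [Finset.card_image_of_injective _ hanti.injective, Finset.card_univ, Fintype.card_fin]
  · rintro y hy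
    obtain ⟨k, -, rfl⟩ := Finset.mem_image.mp hy
    rw [← hf0]
    exact hanti.antitone (Fin.zero_le k)
  · rw [map_one, one_mul, Finset.prod_image (fun a _ b _ h => hanti.injective h)]
    exact hfact
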